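/- Let B ∈ ℂ^{m×n}, W ∈ ℂ^{n×m}, let k be a natural number with k = ind(WB), let H be the Moore–Penrose inverse of B, let Z be a minimal rank W-weighted right weak Drazin inverse of B, and set Y₁ = W·Z·W·B·H. Then: (i) B·Y₁ is idempotent with col(B·Y₁) = col(B·W·Z) and N(B·Y₁) = N((W·B)^{k+1}·H); (ii) Y₁·B is idempotent with col(Y₁·B) = col(W·Z) and N(Y₁·B) = N((W·B)^k); (iii) Y₁·B·Y₁ = Y₁, col(Y₁) = col(W·Z) and N(Y₁) = N((W·B)^{k+1}·H). -/
import Mathlib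


open Matrix

/-- The index of a square complex matrix: the least `j` with `rank (M^j) = rank (M^(j+1))`. -/
noncomputable def matIndex {p : ℕ} (M : Matrix (Fin p) (Fin p) ℂ) : ℕ :=
  sInf {j : ℕ | (M ^ j).rank = (M ^ (j + 1)).rank}

/-- The column space of a complex matrix: the range of `v ↦ M *ᵥ v`. -/
noncomputable def colSpace {a b : ℕ} (M : Matrix (Fin a) (Fin b) ℂ) :
    Submodule ℂ (Fin a → ℂ) :=
  LinearMap.range M.mulVecLin

/-- The null space of a complex matrix: the kernel of `v ↦ M *ᵥ v`. -/
noncomputable def nullSpace {a b : ℕ} (M : Matrix (Fin a) (Fin b) ℂ) :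
    Submodule ℂ (Fin b → ℂ) :=
  LinearMap.ker M.mulVecLin


lemma colSpace_mul_le {a b c : ℕ} (M : Matrix (Fin a) (Fin b) ℂ) (N : Matrix (Fin b) (Fin c) ℂ) :
    colSpace (M * N) ≤ colSpace M := by
  rintro x ⟨v, rfl⟩
  exact ⟨N *ᵥ v, by simp [colSpace, Matrix.mulVecLin_apply, Matrix.mulVec_mulVec]⟩

lemma mem_nullSpace_iff {a b : ℕ} {M : Matrix (Fin a) (Fin b) ℂ} {v : Fin b → ℂ} :
    v ∈ nullSpace M ↔ M *ᵥ v = 0 := by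
  simp [nullSpace, LinearMap.mem_ker]

lemma finrank_nullSpace_add_rank {a b : ℕ} (M : Matrix (Fin a) (Fin b) ℂ) :
    Module.finrank ℂ (nullSpace M) + M.rank = b := by
  have := M.mulVecLin.finrank_range_add_finrank_ker
  rw [Module.finrank_fintype_fun_eq_card] at this
  simp only [Fintype.card_fin] at this
  unfold nullSpace Matrix.rank
  omega

lemma nullSpace_eq_of_le_of_rank_le {a a' b : ℕ} (M : Matrix (Fin a) (Fin b) ℂ)
    (N : Matrix (Fin a') (Fin b) ℂ) (hle : nullSpace M ≤ nullSpace N)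
    (hr : M.rank ≤ N.rank) : nullSpace M = nullSpace N := by
  apply Submodule.eq_of_le_of_finrank_le hle
  have h1 := finrank_nullSpace_add_rank M
  have h2 := finrank_nullSpace_add_rank N
  omega

lemma colSpace_le_nullSpace_of_mul_eq_zero {a b c : ℕ} (M : Matrix (Fin a) (Fin b) ℂ)
    (N : Matrix (Fin b) (Fin c) ℂ) (h : M * N = 0) : colSpace N ≤ nullSpace M := by
  rintro x ⟨v, rfl⟩
  rw [mem_nullSpace_iff]
  simp only [colSpace, Matrix.mulVecLin_apply] at *
  rw [Matrix.mulVec_mulVec, h, Matrix.zero_mulVec]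

lemma mul_eq_zero_of_colSpace_le {a b c : ℕ} (M : Matrix (Fin a) (Fin b) ℂ)
    (N : Matrix (Fin b) (Fin c) ℂ) (h : colSpace N ≤ nullSpace M) : M * N = 0 := by
  ext i j
  have : (M * N) *ᵥ (Pi.single j 1) = 0 := by
    rw [← Matrix.mulVec_mulVec]
    have := h ⟨Pi.single j 1, rfl⟩
    rw [mem_nullSpace_iff] at this
    simpa [Matrix.mulVecLin_apply] using this
  have := congrFun this i
  simpa [Matrix.mulVec_single] using this


/-- **Lemma 3.7.** Projection properties of the W-weighted weak DMP inverse `Y₁ = W·Z·W·B·H`. -/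
theorem weighted_weak_DMP_projections {m n : ℕ}
    (B : Matrix (Fin m) (Fin n) ℂ) (W : Matrix (Fin n) (Fin m) ℂ)
    (k : ℕ) (hk : k = matIndex (W * B))
    (H : Matrix (Fin n) (Fin m) ℂ)
    (hH1 : B * H * B = B) (hH2 : H * B * H = H)
    (hH3 : (B * H)ᴴ = B * H) (hH4 : (H * B)ᴴ = H * B)
    (Z : Matrix (Fin m) (Fin n) ℂ)
    (hZ1 : W * (B * W) ^ (k + 1) * Z = (W * B) ^ k)
    (hZ2 : Z.rank = ((W * B) ^ k).rank)
    (Y₁ : Matrix (Fin n) (Fin m) ℂ) (hY₁ : Y₁ = W * Z * W * B * H) :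
    ((B * Y₁) * (B * Y₁) = B * Y₁ ∧
      colSpace (B * Y₁) = colSpace (B * W * Z) ∧
      nullSpace (B * Y₁) = nullSpace ((W * B) ^ (k + 1) * H)) ∧
    ((Y₁ * B) * (Y₁ * B) = Y₁ * B ∧
      colSpace (Y₁ * B) = colSpace (W * Z) ∧
      nullSpace (Y₁ * B) = nullSpace ((W * B) ^ k)) ∧
    (Y₁ * B * Y₁ = Y₁ ∧
      colSpace Y₁ = colSpace (W * Z) ∧
      nullSpace Y₁ = nullSpace ((W * B) ^ (k + 1) * H)) := by
  -- commuting powers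
  have hpow : ∀ j : ℕ, W * (B * W) ^ j = (W * B) ^ j * W := by
    intro j
    induction j with
    | zero => simp
    | succ j ih =>
      rw [pow_succ, pow_succ, ← Matrix.mul_assoc, ih, Matrix.mul_assoc, Matrix.mul_assoc,
        Matrix.mul_assoc, ← Matrix.mul_assoc W B W]
  have hAk : (W * B) ^ (k + 1) * (W * Z) = (W * B) ^ k := by
    rw [← Matrix.mul_assoc, ← hpow, hZ1]
  -- index fact
  have hne : {j : ℕ | ((W * B) ^ j).rank = ((W * B) ^ (j + 1)).rank}.Nonempty := by
    by_contra hcon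
    rw [Set.not_nonempty_iff_eq_empty, Set.eq_empty_iff_forall_notMem] at hcon
    have hlt : ∀ j : ℕ, ((W * B) ^ (j + 1)).rank < ((W * B) ^ j).rank := by
      intro j
      refine lt_of_le_of_ne ?_ fun hh => hcon j hh.symm
      rw [pow_succ]
      exact Matrix.rank_mul_le_left _ _
    have hdec : ∀ j : ℕ, ((W * B) ^ j).rank + j ≤ ((W * B) ^ 0).rank := by
      intro j
      induction j with
      | zero => simp
      | succ j ih => have := hlt j; omega
    have := hdec (((W * B) ^ 0).rank + 1)
    omega
  have h_ind : ((W * B) ^ k).rank = ((W * B) ^ (k + 1)).rank := by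
    rw [hk]; exact Nat.sInf_mem hne
  -- rank of X = W*Z
  have hrX : (W * Z).rank = ((W * B) ^ k).rank := by
    refine le_antisymm ((Matrix.rank_mul_le_right W Z).trans hZ2.le) ?_
    rw [← hAk]
    exact Matrix.rank_mul_le_right _ _
  -- kernel facts
  have hkerX : nullSpace (W * Z) = nullSpace ((W * B) ^ k) := by
    apply nullSpace_eq_of_le_of_rank_le
    · intro v hv
      rw [mem_nullSpace_iff] at *
      rw [← hAk, ← Matrix.mulVec_mulVec, hv, Matrix.mulVec_zero]
    · rw [hrX]
  have hkerAk1 : nullSpace ((W * B) ^ k) = nullSpace ((W * B) ^ (k + 1)) := by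
    apply nullSpace_eq_of_le_of_rank_le
    · intro v hv
      rw [mem_nullSpace_iff] at *
      rw [pow_succ', ← Matrix.mulVec_mulVec, hv, Matrix.mulVec_zero]
    · rw [h_ind]
  -- the key outer-inverse identity X A X = X
  have hXAX : (W * Z) * (W * B) * (W * Z) = W * Z := by
    have hz : (W * Z) * ((W * B) * (W * Z) - 1) = 0 := by
      apply mul_eq_zero_of_colSpace_le
      refine le_trans (colSpace_le_nullSpace_of_mul_eq_zero ((W * B) ^ k) _ ?_) hkerX.symm.le
      rw [Matrix.mul_sub, Matrix.mul_one, ← Matrix.mul_assoc, ← pow_succ, hAk, sub_self]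
    rw [Matrix.mul_sub, Matrix.mul_one, sub_eq_zero] at hz
    rw [Matrix.mul_assoc]
    exact hz
  have hXAX' : W * (Z * (W * (B * (W * Z)))) = W * Z := by
    have := hXAX; simp only [Matrix.mul_assoc] at this; exact this
  -- continuation identities
  have hH1c : ∀ q (C : Matrix (Fin n) (Fin q) ℂ), B * (H * (B * C)) = B * C := by
    intro q C
    rw [← Matrix.mul_assoc, ← Matrix.mul_assoc, hH1]
  have hXAXc : ∀ q (C : Matrix (Fin n) (Fin q) ℂ),
      W * (Z * (W * (B * (W * (Z * C))))) = W * (Z * C) := by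
    intro q C
    have := congrArg (· * C) hXAX
    simp only [Matrix.mul_assoc] at this
    exact this
  -- Y₁ * B = X * A
  have hY₁B : Y₁ * B = (W * Z) * (W * B) := by
    rw [hY₁]
    simp only [Matrix.mul_assoc]
    rw [← Matrix.mul_assoc B H B, hH1]
  -- vector-level helpers
  have hkerXv : ∀ u : Fin n → ℂ, (W *ᵥ (Z *ᵥ u) = 0 ↔ ((W * B) ^ k) *ᵥ u = 0) := by
    intro u
    rw [Matrix.mulVec_mulVec]
    constructor
    · intro h; exact mem_nullSpace_iff.1 (hkerX.le (mem_nullSpace_iff.2 h))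
    · intro h; exact mem_nullSpace_iff.1 (hkerX.symm.le (mem_nullSpace_iff.2 h))
  have hXAXv : ∀ u : Fin n → ℂ,
      W *ᵥ Z *ᵥ W *ᵥ B *ᵥ W *ᵥ Z *ᵥ u = W *ᵥ Z *ᵥ u := by
    intro u
    have := congrArg (fun M => M *ᵥ u) hXAX
    simpa only [← Matrix.mulVec_mulVec] using this
  refine ⟨⟨?_, ?_, ?_⟩, ⟨?_, ?_, ?_⟩, ⟨?_, ?_, ?_⟩⟩
  · -- B Y₁ idempotent
    rw [hY₁]
    simp only [Matrix.mul_assoc]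
    rw [hH1c, hXAXc]
  · -- colSpace (B*Y₁) = colSpace (B*W*Z)
    have e1 : B * Y₁ = (B * W * Z) * (W * (B * H)) := by
      rw [hY₁]; simp only [Matrix.mul_assoc]
    have e2 : (B * Y₁) * (B * (W * Z)) = B * (W * Z) := by
      rw [hY₁]
      simp only [Matrix.mul_assoc]
      rw [hH1c, hXAX']
    refine le_antisymm (e1 ▸ colSpace_mul_le _ _) ?_
    have : colSpace (B * W * Z) = colSpace ((B * Y₁) * (B * (W * Z))) := by
      rw [e2, Matrix.mul_assoc]
    rw [this]
    exact colSpace_mul_le _ _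
  · -- nullSpace (B*Y₁) = nullSpace (A^{k+1} H)
    rw [hY₁]
    ext v
    rw [mem_nullSpace_iff, mem_nullSpace_iff]
    simp only [pow_succ, ← Matrix.mulVec_mulVec]
    constructor
    · intro h
      have h2 : W *ᵥ B *ᵥ W *ᵥ Z *ᵥ W *ᵥ B *ᵥ H *ᵥ v = 0 := by
        rw [h, Matrix.mulVec_zero]
      have h3 := hXAXv (W *ᵥ B *ᵥ H *ᵥ v)
      rw [h2, Matrix.mulVec_zero, Matrix.mulVec_zero] at h3
      exact (hkerXv _).1 h3.symm
    · intro h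
      rw [(hkerXv _).2 h, Matrix.mulVec_zero]
  · -- Y₁ B idempotent
    rw [hY₁B]
    simp only [Matrix.mul_assoc]
    rw [hXAXc]
  · -- colSpace (Y₁*B) = colSpace (W*Z)
    refine le_antisymm (hY₁B ▸ colSpace_mul_le _ _) ?_
    have e : (Y₁ * B) * (W * Z) = W * Z := by rw [hY₁B]; exact hXAX
    exact e ▸ colSpace_mul_le (Y₁ * B) (W * Z)
  · -- nullSpace (Y₁*B) = nullSpace (A^k)
    rw [hY₁B]
    symm
    apply nullSpace_eq_of_le_of_rank_le
    · intro v hv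
      rw [mem_nullSpace_iff] at *
      have hv1 : ((W * B) ^ (k + 1)) *ᵥ v = 0 := by
        have := hkerAk1.le (mem_nullSpace_iff.2 hv)
        exact mem_nullSpace_iff.1 this
      have hv2 : ((W * B) ^ k) *ᵥ ((W * B) *ᵥ v) = 0 := by
        rw [Matrix.mulVec_mulVec, ← pow_succ]
        exact hv1
      have hv3 : W *ᵥ Z *ᵥ ((W * B) *ᵥ v) = 0 := (hkerXv _).2 hv2
      simp only [← Matrix.mulVec_mulVec] at hv3 ⊢
      exact hv3
    · have h1 : (W * Z).rank ≤ ((W * Z) * (W * B)).rank := by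
        conv_lhs => rw [← hXAX]
        exact Matrix.rank_mul_le_left _ _
      calc ((W * B) ^ k).rank = (W * Z).rank := hrX.symm
        _ ≤ _ := h1
  · -- Y₁ B Y₁ = Y₁
    rw [hY₁]
    simp only [Matrix.mul_assoc]
    rw [hH1c, hXAXc]
  · -- colSpace Y₁ = colSpace (W*Z)
    have e1 : Y₁ = (W * Z) * (W * B * H) := by
      rw [hY₁]; simp only [Matrix.mul_assoc]
    have e2 : Y₁ * (B * (W * Z)) = W * Z := by
      rw [hY₁]
      simp only [Matrix.mul_assoc]
      rw [hH1c, hXAX']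
    refine le_antisymm (e1 ▸ colSpace_mul_le _ _) (e2 ▸ colSpace_mul_le Y₁ (B * (W * Z)))
  · -- nullSpace Y₁ = nullSpace (A^{k+1} H)
    rw [hY₁]
    ext v
    rw [mem_nullSpace_iff, mem_nullSpace_iff]
    simp only [pow_succ, ← Matrix.mulVec_mulVec]
    exact hkerXv (W *ᵥ B *ᵥ H *ᵥ v)
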